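/- Let T > 0 and c ∈ ℝ with c ≠ 0 and 4|c| < T². Let 𝓕'(T,c) ⊆ 𝓕(T,c) be the subset of functions whose Lipschitz constant is strictly less than 1. Then 𝓕'(T,c) is nonempty and sup_{f ∈ 𝓕'(T,c)} L(f) = sup_{f ∈ 𝓕(T,c)} L(f). -/

import Mathlib

open MeasureTheory Set

/-- `𝓕(T,c)`: the set of `1`-Lipschitz functions on `[0,T]` vanishing at the
endpoints and enclosing signed area `c`. -/
def memF (T c : ℝ) (f : ℝ → ℝ) : Prop :=
  LipschitzOnWith 1 f (Icc (0:ℝ) T) ∧ f 0 = 0 ∧ f T = 0 ∧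
    (∫ t in (0:ℝ)..T, f t) = c

/-- `𝓕'(T,c)`: the subset of `𝓕(T,c)` of functions with Lipschitz constant
strictly less than `1`. -/
def memF' (T c : ℝ) (f : ℝ → ℝ) : Prop :=
  memF T c f ∧ ∃ K : NNReal, (K : ℝ) < 1 ∧ LipschitzOnWith K f (Icc (0:ℝ) T)

/-- The Lorentzian length of the graph of `f` over `[0,T]`. -/
noncomputable def graphLength (T : ℝ) (f : ℝ → ℝ) : ℝ :=
  ∫ t in (0:ℝ)..T, Real.sqrt (1 - (deriv f t)^2)

/- ### Auxiliary lemmas -/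

lemma aux_le_of_forall_pos (a b : ℝ) (h : ∀ ε : ℝ, 0 < ε → a ≤ b + ε) : a ≤ b := by
  by_contra hlt
  push_neg at hlt
  have := h ((a - b)/2) (by linarith)
  linarith

lemma aux_sqrt_le_one (x : ℝ) : Real.sqrt (1 - x^2) ≤ 1 := by
  calc Real.sqrt (1 - x^2) ≤ Real.sqrt 1 := Real.sqrt_le_sqrt (by nlinarith [sq_nonneg x])
    _ = 1 := Real.sqrt_one

lemma aux_integrand_integrable (T : ℝ) (f : ℝ → ℝ) :
    IntervalIntegrable (fun t => Real.sqrt (1 - (deriv f t)^2)) volume 0 T := by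
  have hm : Measurable (fun t => Real.sqrt (1 - (deriv f t)^2)) :=
    Real.continuous_sqrt.measurable.comp
      (measurable_const.sub ((measurable_deriv f).pow_const 2))
  rw [intervalIntegrable_iff]
  have h1 : IntegrableOn (fun _ : ℝ => (1:ℝ)) (Set.uIoc (0:ℝ) T) volume :=
    integrableOn_const measure_Ioc_lt_top.ne
  exact h1.mono' hm.aestronglyMeasurable (Filter.Eventually.of_forall fun t => by
    rw [Real.norm_eq_abs, abs_of_nonneg (Real.sqrt_nonneg _)]
    exact aux_sqrt_le_one _)

lemma aux_graphLength_nonneg (T : ℝ) (hT : 0 ≤ T) (f : ℝ → ℝ) : 0 ≤ graphLength T f :=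
  intervalIntegral.integral_nonneg hT (fun t _ => Real.sqrt_nonneg _)

lemma aux_graphLength_le (T : ℝ) (hT : 0 ≤ T) (f : ℝ → ℝ) : graphLength T f ≤ T := by
  have : graphLength T f ≤ ∫ _t in (0:ℝ)..T, (1:ℝ) :=
    intervalIntegral.integral_mono_on hT (aux_integrand_integrable T f)
      intervalIntegrable_const (fun t _ => aux_sqrt_le_one _)
  simpa using this

lemma aux_concave {a b l : ℝ} (ha : |a| ≤ 1) (hb : |b| ≤ 1) (hl0 : 0 ≤ l) (hl1 : l ≤ 1) :
    l * Real.sqrt (1 - a^2) + (1 - l) * Real.sqrt (1 - b^2)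
      ≤ Real.sqrt (1 - (l*a + (1-l)*b)^2) := by
  have ha2 : a^2 ≤ 1 := by rw [← sq_abs]; nlinarith [abs_nonneg a]
  have hb2 : b^2 ≤ 1 := by rw [← sq_abs]; nlinarith [abs_nonneg b]
  set u := Real.sqrt (1 - a^2) with hu_def
  set v := Real.sqrt (1 - b^2) with hv_def
  have hu0 : 0 ≤ u := Real.sqrt_nonneg _
  have hv0 : 0 ≤ v := Real.sqrt_nonneg _
  have hu : u^2 = 1 - a^2 := Real.sq_sqrt (by linarith)
  have hv : v^2 = 1 - b^2 := Real.sq_sqrt (by linarith)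
  have hab : a*b ≤ 1 := by nlinarith [sq_nonneg (a - b)]
  have huv : u*v ≤ 1 - a*b := by
    have h1 : (u*v)^2 ≤ (1 - a*b)^2 := by
      have h2 : (u*v)^2 = (1-a^2)*(1-b^2) := by rw [mul_pow, hu, hv]
      nlinarith [sq_nonneg (a - b)]
    nlinarith [mul_nonneg hu0 hv0]
  have h1l : (0:ℝ) ≤ 1 - l := by linarith
  have hL0 : 0 ≤ l * u + (1 - l) * v :=
    add_nonneg (mul_nonneg hl0 hu0) (mul_nonneg h1l hv0)
  have hsq : (l * u + (1 - l) * v)^2 ≤ 1 - (l*a + (1-l)*b)^2 := by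
    have hexp : (l*u + (1-l)*v)^2 = l^2*u^2 + 2*l*(1-l)*(u*v) + (1-l)^2*v^2 := by ring
    rw [hexp, hu, hv]
    have h2l : (0:ℝ) ≤ 2*l*(1-l) := by nlinarith
    have h3 := mul_le_mul_of_nonneg_left huv h2l
    nlinarith [h3]
  calc l * u + (1 - l) * v = Real.sqrt ((l * u + (1 - l) * v)^2) :=
        (Real.sqrt_sq hL0).symm
    _ ≤ Real.sqrt (1 - (l*a + (1-l)*b)^2) := Real.sqrt_le_sqrt hsq

/-- The tent-like witness is in `𝓕'`. -/
lemma aux_witness (T c : ℝ) (hT : 0 < T) (hcT : 4 * |c| < T^2) :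
    memF' T c (fun t => (4*c/T^2) * (T - |2*t - T|) / 2) := by
  set s : ℝ := 4*c/T^2 with hs_def
  set f₀ : ℝ → ℝ := fun t => s * (T - |2*t - T|) / 2 with hf₀
  have hT2 : (0:ℝ) < T^2 := by positivity
  have hs : |s| < 1 := by
    have habs : |s| = 4 * |c| / T^2 := by
      rw [hs_def, abs_div, abs_of_pos hT2, abs_mul]
      norm_num
    rw [habs, div_lt_one hT2]
    exact hcT
  have hK : LipschitzWith ⟨|s|, abs_nonneg s⟩ f₀ := by
    apply LipschitzWith.of_dist_le_mul
    intro x y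
    simp only [hf₀, Real.dist_eq, NNReal.coe_mk]
    have h1 : s * (T - |2*x - T|) / 2 - s * (T - |2*y - T|) / 2
        = s/2 * (|2*y - T| - |2*x - T|) := by ring
    rw [h1, abs_mul, abs_div]
    have h2 : |(|2*y - T| - |2*x - T|)| ≤ |(2*y - T) - (2*x - T)| :=
      abs_abs_sub_abs_le_abs_sub _ _
    have h3 : |(2*y - T) - (2*x - T)| = 2 * |y - x| := by
      rw [show (2*y - T) - (2*x - T) = 2*(y - x) by ring, abs_mul]
      norm_num
    have h4 : |y - x| = |x - y| := abs_sub_comm _ _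
    have h5 : (0:ℝ) ≤ |s| := abs_nonneg s
    calc |s| / |2| * |(|2*y - T| - |2*x - T|)| ≤ |s| / |2| * (2 * |x - y|) := by
          rw [h4] at h3
          apply mul_le_mul_of_nonneg_left (h2.trans (le_of_eq h3)); positivity
      _ = |s| * |x - y| := by rw [abs_of_pos (by norm_num : (0:ℝ) < 2)]; ring
  have habs0 : |2*(0:ℝ) - T| = T := by
    rw [show 2*(0:ℝ) - T = -T by ring, abs_neg, abs_of_pos hT]
  have habsT : |2*T - T| = T := by
    rw [show 2*T - T = T by ring, abs_of_pos hT]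
  have hcont2t : Continuous (fun t : ℝ => 2*t) := by continuity
  have hJ : ∀ a b : ℝ, (∫ t in a..b, 2*t) = b^2 - a^2 := by
    intro a b
    rw [intervalIntegral.integral_const_mul, integral_id]
    ring
  have hInt : (∫ t in (0:ℝ)..T, f₀ t) = c := by
    have habs : (∫ t in (0:ℝ)..T, |2*t - T|) = T^2/2 := by
      have hi1 : IntervalIntegrable (fun t : ℝ => |2*t - T|) volume 0 (T/2) :=
        (Continuous.abs (by continuity)).intervalIntegrable _ _
      have hi2 : IntervalIntegrable (fun t : ℝ => |2*t - T|) volume (T/2) T :=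
        (Continuous.abs (by continuity)).intervalIntegrable _ _
      rw [← intervalIntegral.integral_add_adjacent_intervals hi1 hi2]
      have e1 : (∫ t in (0:ℝ)..(T/2), |2*t - T|) = ∫ t in (0:ℝ)..(T/2), (T - 2*t) := by
        apply intervalIntegral.integral_congr
        intro t ht
        rw [uIcc_of_le (by linarith : (0:ℝ) ≤ T/2)] at ht
        obtain ⟨ht1, ht2⟩ := ht
        show |2*t - T| = T - 2*t
        rw [abs_of_nonpos (by linarith)]
        ring
      have e2 : (∫ t in (T/2)..T, |2*t - T|) = ∫ t in (T/2)..T, (2*t - T) := by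
        apply intervalIntegral.integral_congr
        intro t ht
        rw [uIcc_of_le (by linarith : T/2 ≤ T)] at ht
        obtain ⟨ht1, ht2⟩ := ht
        show |2*t - T| = 2*t - T
        rw [abs_of_nonneg (by linarith)]
      have e1' : (∫ t in (0:ℝ)..(T/2), (T - 2*t)) = T^2/4 := by
        rw [intervalIntegral.integral_sub intervalIntegrable_const
          (hcont2t.intervalIntegrable _ _), hJ, intervalIntegral.integral_const]
        simp only [smul_eq_mul, sub_zero]
        ring
      have e2' : (∫ t in (T/2)..T, (2*t - T)) = T^2/4 := by
        rw [intervalIntegral.integral_sub (hcont2t.intervalIntegrable _ _)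
          intervalIntegrable_const, hJ, intervalIntegral.integral_const]
        simp only [smul_eq_mul]
        ring
      rw [e1, e2, e1', e2']
      ring
    have hrw : (fun t => f₀ t) = fun t => s/2 * T - s/2 * |2*t - T| := by
      funext t; simp only [hf₀]; ring
    rw [hrw, intervalIntegral.integral_sub intervalIntegrable_const
      (((Continuous.abs (by continuity)).intervalIntegrable _ _).const_mul (s/2))]
    rw [intervalIntegral.integral_const, intervalIntegral.integral_const_mul, habs]
    simp only [smul_eq_mul, sub_zero]
    rw [hs_def]
    field_simp
    ring
  have hlip1 : LipschitzOnWith 1 f₀ (Icc (0:ℝ) T) :=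
    LipschitzOnWith.weaken (hK.lipschitzOnWith (s := Icc (0:ℝ) T))
      (NNReal.coe_le_coe.1 (by show |s| ≤ ((1:NNReal):ℝ); simpa using hs.le))
  have h0 : f₀ 0 = 0 := by
    show s * (T - |2*(0:ℝ) - T|) / 2 = 0
    rw [habs0]; ring
  have hTT : f₀ T = 0 := by
    show s * (T - |2*T - T|) / 2 = 0
    rw [habsT]; ring
  exact ⟨⟨hlip1, h0, hTT, hInt⟩,
    ⟨⟨|s|, abs_nonneg s⟩, hs, hK.lipschitzOnWith (s := Icc (0:ℝ) T)⟩⟩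

/-- Key convex-combination lemma. -/
lemma aux_combination (T c : ℝ) (hT : 0 < T) {f h : ℝ → ℝ} (hf : memF T c f)
    (hh' : memF' T c h) {l : ℝ} (hl0 : 0 ≤ l) (hl1 : l < 1) :
    memF' T c (fun t => l * f t + (1 - l) * h t) ∧
      l * graphLength T f + (1 - l) * graphLength T h
        ≤ graphLength T (fun t => l * f t + (1 - l) * h t) := by
  obtain ⟨hh, K, hK1, hhK⟩ := hh'
  obtain ⟨hf1, hf0, hfT, hfI⟩ := hf
  obtain ⟨hh1, hh0, hhT, hhI⟩ := hh
  set g : ℝ → ℝ := fun t => l * f t + (1 - l) * h t with hg_def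
  have h1l : (0:ℝ) ≤ 1 - l := by linarith
  have hK0 : (0:ℝ) ≤ K := K.coe_nonneg
  -- Lipschitz constant for g
  set K' : NNReal := ⟨l + (1 - l) * K, by positivity⟩ with hK'_def
  have hK'1 : (K' : ℝ) < 1 := by
    simp only [hK'_def, NNReal.coe_mk]
    show l + (1 - l) * (K:ℝ) < 1
    nlinarith
  have hglip : LipschitzOnWith K' g (Icc (0:ℝ) T) := by
    rw [lipschitzOnWith_iff_dist_le_mul] at hf1 hhK ⊢
    intro x hx y hy
    have h1 := hf1 x hx y hy
    have h2 := hhK x hx y hy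
    simp only [Real.dist_eq, NNReal.coe_one, one_mul] at h1 h2 ⊢
    calc |g x - g y| = |l * (f x - f y) + (1 - l) * (h x - h y)| := by
          simp only [hg_def]; ring_nf
      _ ≤ |l * (f x - f y)| + |(1 - l) * (h x - h y)| := abs_add_le _ _
      _ = l * |f x - f y| + (1 - l) * |h x - h y| := by
          rw [abs_mul, abs_mul, abs_of_nonneg hl0, abs_of_nonneg h1l]
      _ ≤ l * |x - y| + (1 - l) * ((K:ℝ) * |x - y|) :=
          add_le_add (mul_le_mul_of_nonneg_left h1 hl0)
            (mul_le_mul_of_nonneg_left h2 h1l)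
      _ = (K' : ℝ) * |x - y| := by simp only [hK'_def, NNReal.coe_mk]; show _ = (l + (1 - l) * (K:ℝ)) * |x - y|; ring
  -- integrability of f and h
  have hfc : IntervalIntegrable f volume 0 T := by
    apply ContinuousOn.intervalIntegrable
    rw [uIcc_of_le hT.le]
    exact hf1.continuousOn
  have hhc : IntervalIntegrable h volume 0 T := by
    apply ContinuousOn.intervalIntegrable
    rw [uIcc_of_le hT.le]
    exact hh1.continuousOn
  have hgmem : memF' T c g := by
    refine ⟨⟨hglip.weaken (by exact_mod_cast hK'1.le), ?_, ?_, ?_⟩, K', hK'1, hglip⟩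
    · simp [hg_def, hf0, hh0]
    · simp [hg_def, hfT, hhT]
    · rw [show (∫ t in (0:ℝ)..T, g t) = ∫ t in (0:ℝ)..T, (l * f t + (1-l) * h t) from rfl,
        intervalIntegral.integral_add (hfc.const_mul l) (hhc.const_mul (1-l)),
        intervalIntegral.integral_const_mul, intervalIntegral.integral_const_mul,
        hfI, hhI]
      ring
  refine ⟨hgmem, ?_⟩
  -- the length inequality
  have hae : ∀ᵐ t ∂(volume.restrict (Icc (0:ℝ) T)),
      l * Real.sqrt (1 - (deriv f t)^2) + (1 - l) * Real.sqrt (1 - (deriv h t)^2)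
        ≤ Real.sqrt (1 - (deriv g t)^2) := by
    have hdf := ae_restrict_of_ae (μ := volume) (s := Icc (0:ℝ) T)
      hf1.ae_differentiableWithinAt_of_mem
    have hdh := ae_restrict_of_ae (μ := volume) (s := Icc (0:ℝ) T)
      hhK.ae_differentiableWithinAt_of_mem
    have hmem : ∀ᵐ t ∂(volume.restrict (Icc (0:ℝ) T)), t ∈ Icc (0:ℝ) T :=
      ae_restrict_mem measurableSet_Icc
    have hIoo0 : ∀ᵐ t ∂(volume : Measure ℝ), t ∈ Icc (0:ℝ) T → t ∈ Ioo (0:ℝ) T := by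
      rw [ae_iff]
      refine measure_mono_null (fun x hx => ?_)
        ((Set.toFinite ({0, T} : Set ℝ)).measure_zero _)
      · 
        simp only [mem_setOf_eq, Classical.not_imp] at hx
        obtain ⟨h1, h2⟩ := hx
        simp only [mem_Icc] at h1
        simp only [mem_Ioo, not_and_or, not_lt] at h2
        simp only [mem_insert_iff, mem_singleton_iff]
        rcases h2 with h2 | h2
        · left; linarith [le_antisymm h2 h1.1]
        · right; linarith [le_antisymm h1.2 h2]
    have hIoo := ae_restrict_of_ae (μ := volume) (s := Icc (0:ℝ) T) hIoo0
    filter_upwards [hdf, hdh, hmem, hIoo] with t hdft hdht hmemt hIoot'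
    have hIoot : t ∈ Ioo (0:ℝ) T := hIoot' hmemt
    have hnhds : Icc (0:ℝ) T ∈ nhds t := Icc_mem_nhds hIoot.1 hIoot.2
    have hdf' : DifferentiableAt ℝ f t := (hdft hmemt).differentiableAt hnhds
    have hdh' : DifferentiableAt ℝ h t := (hdht hmemt).differentiableAt hnhds
    have hbf : |deriv f t| ≤ 1 := by
      have := hdf'.hasDerivAt.le_of_lipschitzOn hnhds hf1
      simpa [Real.norm_eq_abs] using this
    have hbh : |deriv h t| ≤ 1 := by
      have := hdh'.hasDerivAt.le_of_lipschitzOn hnhds hhK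
      rw [Real.norm_eq_abs] at this
      linarith
    have hgd : HasDerivAt g (l * deriv f t + (1 - l) * deriv h t) t :=
      (hdf'.hasDerivAt.const_mul l).add (hdh'.hasDerivAt.const_mul (1 - l))
    rw [hgd.deriv]
    exact aux_concave hbf hbh hl0 hl1.le
  have hiLHS : IntervalIntegrable
      (fun t => l * Real.sqrt (1 - (deriv f t)^2) + (1 - l) * Real.sqrt (1 - (deriv h t)^2))
      volume 0 T :=
    ((aux_integrand_integrable T f).const_mul l).add
      ((aux_integrand_integrable T h).const_mul (1 - l))
  have key : (∫ t in (0:ℝ)..T,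
      (l * Real.sqrt (1 - (deriv f t)^2) + (1 - l) * Real.sqrt (1 - (deriv h t)^2)))
        ≤ ∫ t in (0:ℝ)..T, Real.sqrt (1 - (deriv g t)^2) :=
    intervalIntegral.integral_mono_ae_restrict hT.le hiLHS (aux_integrand_integrable T g) hae
  calc l * graphLength T f + (1 - l) * graphLength T h
      = ∫ t in (0:ℝ)..T,
        (l * Real.sqrt (1 - (deriv f t)^2) + (1 - l) * Real.sqrt (1 - (deriv h t)^2)) := by
        rw [intervalIntegral.integral_add ((aux_integrand_integrable T f).const_mul l)
          ((aux_integrand_integrable T h).const_mul (1 - l)),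
          intervalIntegral.integral_const_mul, intervalIntegral.integral_const_mul]
        rfl
    _ ≤ _ := key

/-- for `c ≠ 0` and `4|c| < T²`, the set `𝓕'(T,c)` is nonempty and
the supremum of the Lorentzian length over `𝓕'(T,c)` equals the supremum over
`𝓕(T,c)`. -/
theorem sup_length_F'_eq_sup_length_F (T c : ℝ) (hT : 0 < T) (hc : c ≠ 0)
    (hcT : 4 * |c| < T^2) :
    (∃ f : ℝ → ℝ, memF' T c f) ∧
    sSup (graphLength T '' {f | memF' T c f}) =
      sSup (graphLength T '' {f | memF T c f}) := by
  have hw := aux_witness T c hT hcT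
  set h₀ : ℝ → ℝ := fun t => (4*c/T^2) * (T - |2*t - T|) / 2 with hh₀
  refine ⟨⟨h₀, hw⟩, ?_⟩
  have hsub : {f : ℝ → ℝ | memF' T c f} ⊆ {f | memF T c f} := fun f hf => hf.1
  have hne' : (graphLength T '' {f | memF' T c f}).Nonempty := ⟨_, ⟨h₀, hw, rfl⟩⟩
  have hne : (graphLength T '' {f | memF T c f}).Nonempty := ⟨_, ⟨h₀, hw.1, rfl⟩⟩
  have hbdd : BddAbove (graphLength T '' {f | memF T c f}) := by
    refine ⟨T, fun y hy => ?_⟩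
    obtain ⟨f, _, rfl⟩ := hy
    exact aux_graphLength_le T hT.le f
  have hbdd' : BddAbove (graphLength T '' {f | memF' T c f}) :=
    hbdd.mono (image_mono hsub)
  refine le_antisymm (csSup_le_csSup hbdd hne' (image_mono hsub)) ?_
  apply csSup_le hne
  rintro y ⟨f, hf, rfl⟩
  apply aux_le_of_forall_pos
  intro ε hε
  set l : ℝ := max 0 (1 - ε/(T+1)) with hl_def
  have hl0 : 0 ≤ l := le_max_left _ _
  have hl1 : l < 1 := by
    apply max_lt one_pos
    have : 0 < ε/(T+1) := by positivity
    linarith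
  have h1l : 1 - l ≤ ε/(T+1) := by
    have := le_max_right 0 (1 - ε/(T+1))
    simp only [hl_def]
    linarith
  obtain ⟨hgmem, hineq⟩ := aux_combination T c hT hf hw hl0 hl1
  have hle : graphLength T (fun t => l * f t + (1 - l) * h₀ t)
      ≤ sSup (graphLength T '' {f | memF' T c f}) :=
    le_csSup hbdd' ⟨_, hgmem, rfl⟩
  have h₀nn : 0 ≤ graphLength T h₀ := aux_graphLength_nonneg T hT.le h₀
  have hfT' : graphLength T f ≤ T := aux_graphLength_le T hT.le f
  have hfnn : 0 ≤ graphLength T f := aux_graphLength_nonneg T hT.le f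
  have h1 : graphLength T f - ε ≤ l * graphLength T f := by
    have h2 : (1 - l) * graphLength T f ≤ (ε/(T+1)) * T := by
      apply mul_le_mul h1l hfT' hfnn (by positivity)
    have h3 : (ε/(T+1)) * T ≤ ε := by
      rw [div_mul_eq_mul_div, div_le_iff₀ (by linarith)]
      nlinarith
    nlinarith
  have h4 : l * graphLength T f ≤ l * graphLength T f + (1 - l) * graphLength T h₀ := by
    nlinarith
  linarith [h1, h4, hineq, hle]
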